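/- With 𝒜 = [[A₁, B₁ᵀ, 0],[C₁, -A₂, B₂ᵀ],[0, C₂, A₃]] and the preconditioner 𝒫₃ = [[A₁,0,0],[C₁,S₂,0],[0,-C₂,-S₃]], where S₂ = A₂ + C₁A₁⁻¹B₁ᵀ and S₃ = A₃ + C₂S₂⁻¹B₂ᵀ are invertible, the preconditioned matrix 𝒯 = 𝒫₃⁻¹𝒜 satisfies (𝒯 - I)(𝒯 + I)² = 0. -/

import Mathlib

open Matrix

theorem stmt_3 {K : Type*} [Field K] {n₁ n₂ n₃ : ℕ}
    (A₁ : Matrix (Fin n₁) (Fin n₁) K) (A₂ : Matrix (Fin n₂) (Fin n₂) K)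
    (A₃ : Matrix (Fin n₃) (Fin n₃) K)
    (B₁ C₁ : Matrix (Fin n₂) (Fin n₁) K) (B₂ C₂ : Matrix (Fin n₃) (Fin n₂) K)
    (hA₁ : IsUnit A₁)
    (S₂ : Matrix (Fin n₂) (Fin n₂) K) (hS₂def : S₂ = A₂ + C₁ * A₁⁻¹ * B₁ᵀ)
    (hS₂ : IsUnit S₂)
    (S₃ : Matrix (Fin n₃) (Fin n₃) K) (hS₃def : S₃ = A₃ + C₂ * S₂⁻¹ * B₂ᵀ)
    (hS₃ : IsUnit S₃)
    (𝒜 : Matrix ((Fin n₁ ⊕ Fin n₂) ⊕ Fin n₃) ((Fin n₁ ⊕ Fin n₂) ⊕ Fin n₃) K)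
    (h𝒜 : 𝒜 = fromBlocks (fromBlocks A₁ B₁ᵀ C₁ (-A₂)) (fromRows 0 B₂ᵀ)
      (fromCols 0 C₂) A₃)
    (P : Matrix ((Fin n₁ ⊕ Fin n₂) ⊕ Fin n₃) ((Fin n₁ ⊕ Fin n₂) ⊕ Fin n₃) K)
    (hP : P = fromBlocks (fromBlocks A₁ 0 C₁ S₂) 0 (fromCols 0 (-C₂)) (-S₃)) :
    (P⁻¹ * 𝒜 - 1) * (P⁻¹ * 𝒜 + 1) ^ 2 = 0 := by
  have hdA₁ : IsUnit A₁.det := (isUnit_iff_isUnit_det _).mp hA₁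
  have hdS₂ : IsUnit S₂.det := (isUnit_iff_isUnit_det _).mp hS₂
  have hdS₃ : IsUnit S₃.det := (isUnit_iff_isUnit_det _).mp hS₃
  have hdP : IsUnit P.det := by
    rw [hP, det_fromBlocks_zero₁₂, det_fromBlocks_zero₁₂]
    exact (hdA₁.mul hdS₂).mul ((isUnit_iff_isUnit_det _).mp hS₃.neg)
  set X : Matrix (Fin n₁) (Fin n₂) K := A₁⁻¹ * B₁ᵀ with hX
  set Y : Matrix (Fin n₂) (Fin n₃) K := S₂⁻¹ * B₂ᵀ with hY
  set T : Matrix ((Fin n₁ ⊕ Fin n₂) ⊕ Fin n₃) ((Fin n₁ ⊕ Fin n₂) ⊕ Fin n₃) K :=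
    fromBlocks (fromBlocks 1 X 0 (-1)) (fromRows 0 Y) 0 (-1) with hT
  have hA₁X : A₁ * X = B₁ᵀ := by
    rw [hX, ← Matrix.mul_assoc, mul_nonsing_inv _ hdA₁, Matrix.one_mul]
  have hS₂Y : S₂ * Y = B₂ᵀ := by
    rw [hY, ← Matrix.mul_assoc, mul_nonsing_inv _ hdS₂, Matrix.one_mul]
  have hPT : P * T = 𝒜 := by
    rw [hP, hT, h𝒜, fromBlocks_multiply, fromBlocks_multiply, fromBlocks_mul_fromRows,
      fromCols_mul_fromBlocks, fromCols_mul_fromRows]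
    simp only [Matrix.mul_one, Matrix.one_mul, Matrix.mul_zero, Matrix.zero_mul,
      Matrix.mul_neg, Matrix.neg_mul, add_zero, zero_add, neg_zero, hA₁X, hS₂Y, neg_neg]
    rw [show C₁ * X + -S₂ = -A₂ from by rw [hX, ← Matrix.mul_assoc, hS₂def]; abel,
        show -(C₂ * Y) + S₃ = A₃ from by rw [hY, ← Matrix.mul_assoc, hS₃def]; abel]
  have hTeq : P⁻¹ * 𝒜 = T := by
    rw [← hPT, ← Matrix.mul_assoc, nonsing_inv_mul _ hdP, Matrix.one_mul]
  rw [hTeq, pow_two, hT]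
  have h1 : (1 : Matrix ((Fin n₁ ⊕ Fin n₂) ⊕ Fin n₃) ((Fin n₁ ⊕ Fin n₂) ⊕ Fin n₃) K)
      = fromBlocks (fromBlocks 1 0 0 1) 0 0 1 := by
    rw [← fromBlocks_one, ← fromBlocks_one]
  rw [h1]
  simp only [fromBlocks_add, fromBlocks_multiply, fromBlocks_mul_fromRows,
    fromRows_mul, add_zero, zero_add, sub_zero, zero_sub, mul_zero, zero_mul, neg_mul,
    mul_neg, neg_neg, mul_one, one_mul, neg_zero]
  simp only [sub_eq_add_neg, fromBlocks_neg, neg_zero, fromBlocks_add, fromBlocks_multiply,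
    fromBlocks_mul_fromRows, fromRows_mul, Matrix.add_mul, Matrix.mul_add, mul_zero, zero_mul,
    add_zero, zero_add, neg_add_cancel, add_neg_cancel, mul_one, one_mul, mul_neg, neg_mul,
    neg_neg, Matrix.mul_zero, Matrix.zero_mul]
  simp [Matrix.fromRows_zero, Matrix.fromBlocks_zero]
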